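/- Let n ≥ 2 and m ≥ 1 be natural numbers. There exists a function A : ℝ^n → ℝ realized by a ReLU network with (m+5)·⌈log₂ n⌉ + 2 hidden layers of widths 3n, n, 6n, 6n, …, 6n (input dimension n, output dimension 1), such that |A(x) - Π_{j=1}^n g_1(x_j)| ≤ 3^n · 2^{-m} for all x = (x_1,…,x_n) ∈ [0,1]^n. -/

import Mathlib

/-- The ReLU function `σ(x) = max{x, 0}`. -/
noncomputable def relu (x : ℝ) : ℝ := max x 0

/-- The tent function `g₁(x) = max{1 - |x|, 0}`. -/
noncomputable def g1 (x : ℝ) : ℝ := max (1 - |x|) 0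

/-- `RealizedByReluNet n₀ ws F` means the scalar-valued function `F : ℝ^{n₀} → ℝ` is exactly
a ReLU network with hidden layers of widths given by the list `ws`:
`F = W_{L+1} ∘ σ ∘ W_L ∘ ⋯ ∘ σ ∘ W_1` with affine maps `W_i` (given by a matrix and a bias
vector) and the ReLU `σ` applied componentwise. -/
def RealizedByReluNet : (n0 : ℕ) → List ℕ → ((Fin n0 → ℝ) → ℝ) → Prop
  | n0, [], F => ∃ (a : Fin n0 → ℝ) (b : ℝ), ∀ x, F x = ∑ j, a j * x j + b
  | n0, w :: ws, F => ∃ (A : Matrix (Fin w) (Fin n0) ℝ) (b : Fin w → ℝ)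
      (G : (Fin w → ℝ) → ℝ), RealizedByReluNet w ws G ∧
      ∀ x, F x = G (fun i => relu (A.mulVec x i + b i))

/-! ### basic relu lemmas -/

lemma relu_nonneg (x : ℝ) : 0 ≤ relu x := le_max_right _ _

lemma relu_of_nonneg {x : ℝ} (h : 0 ≤ x) : relu x = x := max_eq_left h

lemma relu_of_nonpos {x : ℝ} (h : x ≤ 0) : relu x = 0 := max_eq_right h

lemma relu_le_one {x : ℝ} (h : x ≤ 1) : relu x ≤ 1 := max_le h zero_le_one

lemma relu_relu (x : ℝ) : relu (relu x) = relu x := relu_of_nonneg (relu_nonneg x)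

lemma relu_sub_const (x c : ℝ) (hc : 0 ≤ c) : relu (relu x - c) = relu (x - c) := by
  rcases le_or_gt x 0 with h | h
  · rw [relu_of_nonpos h, relu_of_nonpos (by linarith), relu_of_nonpos (by linarith)]
  · rw [relu_of_nonneg h.le]

lemma relu_const_mul (c x : ℝ) (hc : 0 ≤ c) : relu (c * x) = c * relu x := by
  rcases le_or_gt x 0 with h | h
  · rw [relu_of_nonpos h, relu_of_nonpos (by nlinarith), mul_zero]
  · rw [relu_of_nonneg h.le, relu_of_nonneg (by nlinarith)]

lemma abs_relu_sub_le (x c : ℝ) (hc : 0 ≤ c) : |relu x - c| ≤ |x - c| := by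
  rcases le_or_gt x 0 with h | h
  · rw [relu_of_nonpos h]
    rw [abs_of_nonpos (by linarith), abs_of_nonpos (by linarith)]
    linarith
  · rw [relu_of_nonneg h.le]

/-! ### the sawtooth and approximate squaring -/

noncomputable def saw (x : ℝ) : ℝ := 2 * relu x - 4 * relu (x - 1/2)

lemma saw_eval {x : ℝ} (h0 : 0 ≤ x) (h1 : x ≤ 1) :
    saw x = if x ≤ 1/2 then 2 * x else 2 - 2 * x := by
  unfold saw
  split_ifs with h
  · rw [relu_of_nonneg h0, relu_of_nonpos (by linarith)]; ring
  · rw [relu_of_nonneg h0, relu_of_nonneg (by linarith)]; ring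

lemma saw_nonneg {x : ℝ} (h0 : 0 ≤ x) (h1 : x ≤ 1) : 0 ≤ saw x := by
  rw [saw_eval h0 h1]; split_ifs with h <;> linarith

lemma saw_le_one {x : ℝ} (h0 : 0 ≤ x) (h1 : x ≤ 1) : saw x ≤ 1 := by
  rw [saw_eval h0 h1]; split_ifs with h <;> linarith

lemma saw_quad {x : ℝ} (h0 : 0 ≤ x) (h1 : x ≤ 1) :
    2 * saw x - saw x ^ 2 = 4 * x - 4 * x ^ 2 := by
  rw [saw_eval h0 h1]; split_ifs with h <;> ring

lemma sawIter_mem {x : ℝ} (h0 : 0 ≤ x) (h1 : x ≤ 1) (k : ℕ) :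
    0 ≤ saw^[k] x ∧ saw^[k] x ≤ 1 := by
  induction k with
  | zero => exact ⟨h0, h1⟩
  | succ k ih =>
      rw [Function.iterate_succ_apply']
      exact ⟨saw_nonneg ih.1 ih.2, saw_le_one ih.1 ih.2⟩

noncomputable def asq (s : ℕ) (x : ℝ) : ℝ := x - ∑ k ∈ Finset.range s, saw^[k+1] x / 4^(k+1)

lemma asq_zero (x : ℝ) : asq 0 x = x := by simp [asq]

lemma asq_succ (s : ℕ) (x : ℝ) : asq (s+1) x = asq s x - saw^[s+1] x / 4^(s+1) := by
  rw [asq, Finset.sum_range_succ, asq]; ring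

lemma asq_eq {x : ℝ} (h0 : 0 ≤ x) (h1 : x ≤ 1) (s : ℕ) :
    asq s x = x^2 + (saw^[s] x - (saw^[s] x)^2) / 4^s := by
  induction s with
  | zero => simp [asq]
  | succ s ih =>
      rw [asq_succ, ih, Function.iterate_succ_apply']
      have hy := sawIter_mem h0 h1 s
      have key : 4*(saw^[s] x - (saw^[s] x)^2) - saw (saw^[s] x)
          = saw (saw^[s] x) - (saw (saw^[s] x))^2 := by
        linarith [saw_quad hy.1 hy.2]
      have h4pos : (0:ℝ) < 4^s := by positivity
      have gen : ∀ a z t : ℝ, t ≠ 0 → 4*(a - a^2) - z = z - z^2 →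
          (a - a^2)/t - z/(t*4) = (z - z^2)/(t*4) := by
        intro a z t ht hk
        rw [← hk]
        field_simp
      have hmain : (saw^[s] x - (saw^[s] x)^2)/4^s - saw (saw^[s] x)/4^(s+1)
          = (saw (saw^[s] x) - (saw (saw^[s] x))^2)/4^(s+1) := by
        rw [pow_succ]
        exact gen (saw^[s] x) (saw (saw^[s] x)) ((4:ℝ)^s) (ne_of_gt h4pos) key
      linarith [hmain]

lemma asq_ge {x : ℝ} (h0 : 0 ≤ x) (h1 : x ≤ 1) (s : ℕ) : x^2 ≤ asq s x := by
  rw [asq_eq h0 h1]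
  have hy := sawIter_mem h0 h1 s
  have hnum : 0 ≤ saw^[s] x - (saw^[s] x)^2 := by nlinarith [hy.1, hy.2]
  have h4 : (0:ℝ) < 4^s := by positivity
  have := div_nonneg hnum h4.le
  linarith

lemma asq_le {x : ℝ} (h0 : 0 ≤ x) (h1 : x ≤ 1) (s : ℕ) : asq s x ≤ x^2 + 1/(4 * 4^s) := by
  rw [asq_eq h0 h1]
  have hy := sawIter_mem h0 h1 s
  have h1' : saw^[s] x - (saw^[s] x)^2 ≤ 1/4 := by nlinarith [sq_nonneg (saw^[s] x - 1/2)]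
  have h4pos : (0:ℝ) < 4^s := by positivity
  have h5 : (saw^[s] x - (saw^[s] x)^2)/4^s ≤ (1/4)/4^s := by gcongr
  have h6 : (1/4:ℝ)/4^s = 1/(4*4^s) := by rw [div_div]
  linarith [h5, h6.le, h6.ge]

lemma asq_le_self {x : ℝ} (h0 : 0 ≤ x) (h1 : x ≤ 1) (s : ℕ) : asq s x ≤ x := by
  unfold asq
  have : 0 ≤ ∑ k ∈ Finset.range s, saw^[k+1] x / 4^(k+1) := by
    apply Finset.sum_nonneg
    intro k _
    have hk := sawIter_mem h0 h1 (k+1)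
    exact div_nonneg hk.1 (by positivity)
  linarith

lemma asq_nonneg {x : ℝ} (h0 : 0 ≤ x) (h1 : x ≤ 1) (s : ℕ) : 0 ≤ asq s x :=
  (sq_nonneg x).trans (asq_ge h0 h1 s)

/-! ### Affine functionals -/

def IsAff {N : ℕ} (φ : (Fin N → ℝ) → ℝ) : Prop :=
  ∃ (a : Fin N → ℝ) (b : ℝ), ∀ y, φ y = ∑ j, a j * y j + b

lemma IsAff.const {N : ℕ} (c : ℝ) : IsAff (fun _ : Fin N → ℝ => c) :=
  ⟨fun _ => 0, c, fun y => by simp⟩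

lemma IsAff.coord {N : ℕ} (j : Fin N) : IsAff (fun y => y j) := by
  refine ⟨fun j' => if j' = j then 1 else 0, 0, fun y => ?_⟩
  rw [Finset.sum_eq_single j] <;> simp +contextual

lemma IsAff.add {N : ℕ} {φ ψ : (Fin N → ℝ) → ℝ} (hφ : IsAff φ) (hψ : IsAff ψ) :
    IsAff (fun y => φ y + ψ y) := by
  obtain ⟨a, b, ha⟩ := hφ
  obtain ⟨a', b', ha'⟩ := hψ
  refine ⟨fun j => a j + a' j, b + b', fun y => ?_⟩
  show φ y + ψ y = _
  rw [ha, ha']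
  rw [Finset.sum_congr rfl (fun j _ => add_mul (a j) (a' j) (y j)), Finset.sum_add_distrib]
  ring

lemma IsAff.cmul {N : ℕ} {φ : (Fin N → ℝ) → ℝ} (c : ℝ) (hφ : IsAff φ) :
    IsAff (fun y => c * φ y) := by
  obtain ⟨a, b, ha⟩ := hφ
  refine ⟨fun j => c * a j, c * b, fun y => ?_⟩
  show c * φ y = _
  rw [ha, mul_add, Finset.mul_sum]
  exact congrArg (· + c*b) (Finset.sum_congr rfl fun j _ => by ring)

lemma IsAff.sub {N : ℕ} {φ ψ : (Fin N → ℝ) → ℝ} (hφ : IsAff φ) (hψ : IsAff ψ) :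
    IsAff (fun y => φ y - ψ y) := by
  have := hφ.add (hψ.cmul (-1))
  simpa [sub_eq_add_neg] using this

lemma IsAff.subc {N : ℕ} {φ : (Fin N → ℝ) → ℝ} (hφ : IsAff φ) (c : ℝ) :
    IsAff (fun y => φ y - c) := hφ.sub (IsAff.const c)

/-- extension of a vector by zero, to avoid `Fin` proofs everywhere -/
def yext {N : ℕ} (y : Fin N → ℝ) (j : ℕ) : ℝ := if h : j < N then y ⟨j, h⟩ else 0

lemma IsAff.yext {N : ℕ} (j : ℕ) : IsAff (fun y : Fin N → ℝ => yext y j) := by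
  unfold _root_.yext
  split
  · exact IsAff.coord _
  · exact IsAff.const 0

lemma yext_lt {N : ℕ} (y : Fin N → ℝ) {j : ℕ} (h : j < N) : yext y j = y ⟨j, h⟩ := dif_pos h

/-! ### stacking relu layers -/

/-- `Stack n0 ws w' Φ`: `Φ` is a stack of relu hidden layers of widths `ws` (ending with
width `w'`), in the sense that it can be prepended to any further net. -/
def Stack (n0 : ℕ) (ws : List ℕ) (w' : ℕ) (Φ : (Fin n0 → ℝ) → Fin w' → ℝ) : Prop :=
  ∀ (rest : List ℕ) (G : (Fin w' → ℝ) → ℝ), RealizedByReluNet w' rest G →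
    RealizedByReluNet n0 (ws ++ rest) (fun x => G (Φ x))

/-- a single relu layer, described componentwise -/
def ReluLayer {n0 w : ℕ} (L : (Fin n0 → ℝ) → Fin w → ℝ) : Prop :=
  ∀ i, ∃ φ, IsAff φ ∧ ∀ y, L y i = relu (φ y)

lemma ReluLayer.stack {n0 w : ℕ} {L : (Fin n0 → ℝ) → Fin w → ℝ} (hL : ReluLayer L) :
    Stack n0 [w] w L := by
  intro rest G hG
  choose φ hφ hrelu using hL
  choose a b hab using hφ
  refine ⟨Matrix.of a, b, G, hG, fun x => ?_⟩
  show G (L x) = _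
  congr 1
  funext i
  rw [hrelu i x, hab i x]
  simp [Matrix.mulVec, dotProduct]

lemma Stack.comp {n0 w1 w2 : ℕ} {ws1 ws2 : List ℕ}
    {Φ1 : (Fin n0 → ℝ) → Fin w1 → ℝ} {Φ2 : (Fin w1 → ℝ) → Fin w2 → ℝ}
    (h1 : Stack n0 ws1 w1 Φ1) (h2 : Stack w1 ws2 w2 Φ2) :
    Stack n0 (ws1 ++ ws2) w2 (fun x => Φ2 (Φ1 x)) := by
  intro rest G hG
  have := h1 (ws2 ++ rest) (fun y => G (Φ2 y)) (h2 rest G hG)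
  simpa [List.append_assoc] using this

lemma Stack.congr_fun {n0 w : ℕ} {ws : List ℕ} {Φ Φ' : (Fin n0 → ℝ) → Fin w → ℝ}
    (h : Stack n0 ws w Φ) (he : ∀ x, Φ x = Φ' x) : Stack n0 ws w Φ' := by
  have : Φ = Φ' := funext he
  exact this ▸ h

lemma ReluLayer.stack_iterate {w : ℕ} {L : (Fin w → ℝ) → Fin w → ℝ} (hL : ReluLayer L) :
    ∀ s : ℕ, Stack w (List.replicate s w) w (L^[s]) := by
  intro s
  induction s with
  | zero =>
      intro rest G hG
      simpa [Function.iterate_zero] using hG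
  | succ s ih =>
      have := hL.stack.comp ih
      rw [show ([w] ++ List.replicate s w) = List.replicate (s+1) w from rfl] at this
      exact this.congr_fun fun x => by rw [Function.iterate_succ_apply]

lemma realize_nil {n0 : ℕ} {F : (Fin n0 → ℝ) → ℝ} (h : IsAff F) :
    RealizedByReluNet n0 [] F := h

lemma Stack.realize {n0 w : ℕ} {ws : List ℕ} {Φ : (Fin n0 → ℝ) → Fin w → ℝ}
    (h : Stack n0 ws w Φ) {G : (Fin w → ℝ) → ℝ} (hG : IsAff G) :
    RealizedByReluNet n0 ws (fun x => G (Φ x)) := by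
  have := h [] G (realize_nil hG)
  simpa using this

lemma realize_congr {n0 : ℕ} {ws : List ℕ} {F F' : (Fin n0 → ℝ) → ℝ}
    (he : ∀ x, F x = F' x) (h : RealizedByReluNet n0 ws F) :
    RealizedByReluNet n0 ws F' := by
  have : F = F' := funext he
  exact this ▸ h

/-! ### the level: definitions of the three kinds of layers -/

/-- value readout, out-of-range gives 0 -/
noncomputable def Vx {w0 p : ℕ} (V : Fin p → (Fin w0 → ℝ) → ℝ) (j : ℕ) (h : Fin w0 → ℝ) : ℝ :=
  if hj : j < p then V ⟨j, hj⟩ h else 0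

lemma IsAff.vx {w0 p : ℕ} {V : Fin p → (Fin w0 → ℝ) → ℝ} (hV : ∀ i, IsAff (V i)) (j : ℕ) :
    IsAff (fun h : Fin w0 → ℝ => Vx V j h) := by
  by_cases hj : j < p
  · unfold Vx; simp only [dif_pos hj]; exact hV _
  · unfold Vx; simp only [dif_neg hj]; exact IsAff.const 0

lemma IsAff.ite {N : ℕ} {C : Prop} [Decidable C] {φ ψ : (Fin N → ℝ) → ℝ}
    (hφ : IsAff φ) (hψ : IsAff ψ) : IsAff (fun y => if C then φ y else ψ y) := by
  by_cases h : C
  · simpa [h] using hφ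
  · simpa [h] using hψ

lemma IsAff.lin3 {N : ℕ} (c1 : ℝ) (j1 : ℕ) (c2 : ℝ) (j2 : ℕ) (c3 : ℝ) (j3 : ℕ) (c0 : ℝ) :
    IsAff (fun y : Fin N → ℝ =>
      c1 * _root_.yext y j1 + c2 * _root_.yext y j2 + c3 * _root_.yext y j3 + c0) :=
  ((((IsAff.yext j1).cmul c1).add ((IsAff.yext j2).cmul c2)).add
    ((IsAff.yext j3).cmul c3)).add (IsAff.const c0)

lemma IsAff.vlin {w0 p : ℕ} {V : Fin p → (Fin w0 → ℝ) → ℝ} (hV : ∀ i, IsAff (V i))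
    (c1 : ℝ) (j : ℕ) (c0 : ℝ) : IsAff (fun h : Fin w0 → ℝ => c1 * Vx V j h + c0) :=
  ((IsAff.vx hV j).cmul c1).add (IsAff.const c0)

/-- first layer of a level: width `w0 → 6n`. -/
noncomputable def l1Pre {w0 p : ℕ} (V : Fin p → (Fin w0 → ℝ) → ℝ) (i : ℕ)
    (h : Fin w0 → ℝ) : ℝ :=
  if i / 9 < p / 2 then
    if i % 9 = 0 then 1 * Vx V (2*(i/9)) h + 0
    else if i % 9 = 1 then 1 * Vx V (2*(i/9)) h + (-(1/2))
    else if i % 9 = 2 then 4 * Vx V (2*(i/9)) h + 0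
    else if i % 9 = 3 then 1 * Vx V (2*(i/9)+1) h + 0
    else if i % 9 = 4 then 1 * Vx V (2*(i/9)+1) h + (-(1/2))
    else if i % 9 = 5 then 4 * Vx V (2*(i/9)+1) h + 0
    else 0
  else if i = 9*(p/2) ∧ p % 2 = 1 then 1 * Vx V (p-1) h + 0
  else 0

noncomputable def levelL1 (n : ℕ) {w0 p : ℕ} (V : Fin p → (Fin w0 → ℝ) → ℝ)
    (h : Fin w0 → ℝ) (i : Fin (6*n)) : ℝ := relu (l1Pre V (i : ℕ) h)

/-- second layer of a level: width `6n → 6n`, restarts the third squaring. -/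
noncomputable def l2Pre (n p : ℕ) (i : ℕ) (y : Fin (6*n) → ℝ) : ℝ :=
  if i / 9 < p / 2 then
    if i % 9 = 0 then 2 * yext y (9*(i/9)) + (-4) * yext y (9*(i/9)+1) + 0 * yext y 0 + 0
    else if i % 9 = 1 then 2 * yext y (9*(i/9)) + (-4) * yext y (9*(i/9)+1) + 0 * yext y 0 + (-(1/2))
    else if i % 9 = 2 then 4 * yext y (9*(i/9)+2) + (-8) * yext y (9*(i/9)) + 16 * yext y (9*(i/9)+1) + 0
    else if i % 9 = 3 then 2 * yext y (9*(i/9)+3) + (-4) * yext y (9*(i/9)+4) + 0 * yext y 0 + 0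
    else if i % 9 = 4 then 2 * yext y (9*(i/9)+3) + (-4) * yext y (9*(i/9)+4) + 0 * yext y 0 + (-(1/2))
    else if i % 9 = 5 then 4 * yext y (9*(i/9)+5) + (-8) * yext y (9*(i/9)+3) + 16 * yext y (9*(i/9)+4) + 0
    else if i % 9 = 6 then (1/2) * yext y (9*(i/9)) + (1/2) * yext y (9*(i/9)+3) + 0 * yext y 0 + 0
    else if i % 9 = 7 then (1/2) * yext y (9*(i/9)) + (1/2) * yext y (9*(i/9)+3) + 0 * yext y 0 + (-(1/2))
    else 2 * yext y (9*(i/9)) + 2 * yext y (9*(i/9)+3) + 0 * yext y 0 + 0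
  else if i = 9*(p/2) ∧ p % 2 = 1 then 1 * yext y (9*(p/2)) + 0 * yext y 0 + 0 * yext y 0 + 0
  else 0

noncomputable def levelL2 (n p : ℕ) (y : Fin (6*n) → ℝ) (i : Fin (6*n)) : ℝ :=
  relu (l2Pre n p (i : ℕ) y)

/-- generic transition layer of a level: width `6n → 6n`. -/
noncomputable def stepPre (n p : ℕ) (i : ℕ) (y : Fin (6*n) → ℝ) : ℝ :=
  if i / 9 < p / 2 then
    if i % 9 = 0 then 2 * yext y (9*(i/9)) + (-4) * yext y (9*(i/9)+1) + 0 * yext y 0 + 0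
    else if i % 9 = 1 then 2 * yext y (9*(i/9)) + (-4) * yext y (9*(i/9)+1) + 0 * yext y 0 + (-(1/2))
    else if i % 9 = 2 then 4 * yext y (9*(i/9)+2) + (-8) * yext y (9*(i/9)) + 16 * yext y (9*(i/9)+1) + 0
    else if i % 9 = 3 then 2 * yext y (9*(i/9)+3) + (-4) * yext y (9*(i/9)+4) + 0 * yext y 0 + 0
    else if i % 9 = 4 then 2 * yext y (9*(i/9)+3) + (-4) * yext y (9*(i/9)+4) + 0 * yext y 0 + (-(1/2))
    else if i % 9 = 5 then 4 * yext y (9*(i/9)+5) + (-8) * yext y (9*(i/9)+3) + 16 * yext y (9*(i/9)+4) + 0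
    else if i % 9 = 6 then 2 * yext y (9*(i/9)+6) + (-4) * yext y (9*(i/9)+7) + 0 * yext y 0 + 0
    else if i % 9 = 7 then 2 * yext y (9*(i/9)+6) + (-4) * yext y (9*(i/9)+7) + 0 * yext y 0 + (-(1/2))
    else 4 * yext y (9*(i/9)+8) + (-8) * yext y (9*(i/9)+6) + 16 * yext y (9*(i/9)+7) + 0
  else if i = 9*(p/2) ∧ p % 2 = 1 then 1 * yext y (9*(p/2)) + 0 * yext y 0 + 0 * yext y 0 + 0
  else 0

noncomputable def levelStep (n p : ℕ) (y : Fin (6*n) → ℝ) (i : Fin (6*n)) : ℝ :=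
  relu (stepPre n p (i : ℕ) y)

lemma reluLayer_l1 (n : ℕ) {w0 p : ℕ} {V : Fin p → (Fin w0 → ℝ) → ℝ}
    (hV : ∀ i, IsAff (V i)) : ReluLayer (levelL1 n V) := by
  intro i
  refine ⟨fun h => l1Pre V (i : ℕ) h, ?_, fun y => rfl⟩
  unfold l1Pre
  repeat' first
    | apply IsAff.ite
    | apply IsAff.vlin hV
    | exact IsAff.const 0

lemma reluLayer_l2 (n p : ℕ) : ReluLayer (levelL2 n p) := by
  intro i
  refine ⟨fun y => l2Pre n p (i : ℕ) y, ?_, fun y => rfl⟩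
  unfold l2Pre
  repeat' first
    | apply IsAff.ite
    | apply IsAff.lin3
    | exact IsAff.const 0

lemma reluLayer_step (n p : ℕ) : ReluLayer (levelStep n p) := by
  intro i
  refine ⟨fun y => stepPre n p (i : ℕ) y, ?_, fun y => rfl⟩
  unfold stepPre
  repeat' first
    | apply IsAff.ite
    | apply IsAff.lin3
    | exact IsAff.const 0

/-! ### semantics of a level -/

def Trip (t : ℕ) (u A B D : ℝ) : Prop :=
  A = saw^[t] u ∧ B = relu (saw^[t] u - 1/2) ∧ D = 4^(t+1) * asq t u

lemma sawdef (x : ℝ) : saw x = 2 * relu x - 4 * relu (x - 1/2) := rfl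

lemma trip_step {t : ℕ} {u A B D : ℝ} (Z : ℝ) (hu0 : 0 ≤ u) (hu1 : u ≤ 1)
    (h : Trip t u A B D) :
    Trip (t+1) u (relu (2*A + (-4)*B + 0*Z + 0))
      (relu (2*A + (-4)*B + 0*Z + (-(1/2))))
      (relu (4*D + (-8)*A + 16*B + 0)) := by
  obtain ⟨hA, hB, hD⟩ := h
  have hz := sawIter_mem hu0 hu1 t
  have hit : saw^[t+1] u = saw (saw^[t] u) := Function.iterate_succ_apply' saw t u
  have hsaw0 : 0 ≤ saw (saw^[t] u) := saw_nonneg hz.1 hz.2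
  have e1 : 2*A + (-4)*B + 0*Z + 0 = saw (saw^[t] u) := by
    rw [hA, hB, sawdef (saw^[t] u), relu_of_nonneg hz.1]; ring
  refine ⟨?_, ?_, ?_⟩
  · rw [e1, relu_of_nonneg hsaw0, ← hit]
  · have e2 : 2*A + (-4)*B + 0*Z + (-(1/2)) = saw (saw^[t] u) - 1/2 := by
      rw [hA, hB, sawdef (saw^[t] u), relu_of_nonneg hz.1]; ring
    rw [e2, ← hit]
  · have e3 : 4*D + (-8)*A + 16*B + 0 = 4^(t+1+1) * asq (t+1) u := by
      rw [hD, hA, hB, asq_succ, hit, sawdef (saw^[t] u), relu_of_nonneg hz.1]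
      have h4 : ((4:ℝ)^(t+1)) ≠ 0 := by positivity
      field_simp
      ring
    rw [e3]
    exact relu_of_nonneg (mul_nonneg (by positivity) (asq_nonneg hu0 hu1 _))

def GoodState (n : ℕ) {w0 p : ℕ} (V : Fin p → (Fin w0 → ℝ) → ℝ) (s : ℕ)
    (h : Fin w0 → ℝ) (y : Fin (6*n) → ℝ) : Prop :=
  (∀ k, k < p/2 →
    Trip (s+1) (relu (Vx V (2*k) h)) (yext y (9*k)) (yext y (9*k+1)) (yext y (9*k+2)) ∧
    Trip (s+1) (relu (Vx V (2*k+1) h)) (yext y (9*k+3)) (yext y (9*k+4)) (yext y (9*k+5)) ∧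
    Trip s ((relu (Vx V (2*k) h) + relu (Vx V (2*k+1) h))/2)
      (yext y (9*k+6)) (yext y (9*k+7)) (yext y (9*k+8))) ∧
  (p % 2 = 1 → yext y (9*(p/2)) = relu (Vx V (p-1) h))

lemma good_step {n w0 p : ℕ} {V : Fin p → (Fin w0 → ℝ) → ℝ} {s : ℕ}
    {h : Fin w0 → ℝ} {y : Fin (6*n) → ℝ}
    (hn : 2 ≤ n) (hpn : p ≤ n)
    (hyp : ∀ i, V i h ≤ 1)
    (hg : GoodState n V s h y) :
    GoodState n V (s+1) h (levelStep n p y) := by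
  have hVle : ∀ j, j < p → Vx V j h ≤ 1 := by
    intro j hj; unfold Vx; rw [dif_pos hj]; exact hyp _
  constructor
  · intro k hk
    obtain ⟨T1, T2, T3⟩ := hg.1 k hk
    have hua : 0 ≤ relu (Vx V (2*k) h) ∧ relu (Vx V (2*k) h) ≤ 1 :=
      ⟨relu_nonneg _, relu_le_one (hVle _ (by omega))⟩
    have hub : 0 ≤ relu (Vx V (2*k+1) h) ∧ relu (Vx V (2*k+1) h) ≤ 1 :=
      ⟨relu_nonneg _, relu_le_one (hVle _ (by omega))⟩
    have hu3 : 0 ≤ (relu (Vx V (2*k) h) + relu (Vx V (2*k+1) h))/2 ∧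
        (relu (Vx V (2*k) h) + relu (Vx V (2*k+1) h))/2 ≤ 1 :=
      ⟨by have := hua.1; have := hub.1; linarith, by have := hua.2; have := hub.2; linarith⟩
    have hev : ∀ d : ℕ, d ≤ 8 → yext (levelStep n p y) (9*k+d)
        = relu (stepPre n p (9*k+d) y) := by
      intro d hd
      have hb : 9*k+d < 6*n := by omega
      rw [yext_lt _ hb]; rfl
    have hev0 : yext (levelStep n p y) (9*k) = relu (stepPre n p (9*k) y) := by
      have hb : 9*k < 6*n := by omega
      rw [yext_lt _ hb]; rfl
    have e0 : stepPre n p (9*k) y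
        = 2 * yext y (9*k) + (-4) * yext y (9*k+1) + 0 * yext y 0 + 0 := by
      have h1 : (9*k)/9 = k := by omega
      have h2 : (9*k)%9 = 0 := by omega
      unfold stepPre; rw [h1, h2, if_pos hk, if_pos rfl]
    have e1 : stepPre n p (9*k+1) y
        = 2 * yext y (9*k) + (-4) * yext y (9*k+1) + 0 * yext y 0 + (-(1/2)) := by
      have h1 : (9*k+1)/9 = k := by omega
      have h2 : (9*k+1)%9 = 1 := by omega
      unfold stepPre; rw [h1, h2, if_pos hk, if_neg (by decide), if_pos rfl]
    have e2 : stepPre n p (9*k+2) y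
        = 4 * yext y (9*k+2) + (-8) * yext y (9*k) + 16 * yext y (9*k+1) + 0 := by
      have h1 : (9*k+2)/9 = k := by omega
      have h2 : (9*k+2)%9 = 2 := by omega
      unfold stepPre
      rw [h1, h2, if_pos hk, if_neg (by decide), if_neg (by decide), if_pos rfl]
    have e3 : stepPre n p (9*k+3) y
        = 2 * yext y (9*k+3) + (-4) * yext y (9*k+4) + 0 * yext y 0 + 0 := by
      have h1 : (9*k+3)/9 = k := by omega
      have h2 : (9*k+3)%9 = 3 := by omega
      unfold stepPre
      rw [h1, h2, if_pos hk, if_neg (by decide), if_neg (by decide), if_neg (by decide),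
        if_pos rfl]
    have e4 : stepPre n p (9*k+4) y
        = 2 * yext y (9*k+3) + (-4) * yext y (9*k+4) + 0 * yext y 0 + (-(1/2)) := by
      have h1 : (9*k+4)/9 = k := by omega
      have h2 : (9*k+4)%9 = 4 := by omega
      unfold stepPre
      rw [h1, h2, if_pos hk, if_neg (by decide), if_neg (by decide), if_neg (by decide),
        if_neg (by decide), if_pos rfl]
    have e5 : stepPre n p (9*k+5) y
        = 4 * yext y (9*k+5) + (-8) * yext y (9*k+3) + 16 * yext y (9*k+4) + 0 := by
      have h1 : (9*k+5)/9 = k := by omega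
      have h2 : (9*k+5)%9 = 5 := by omega
      unfold stepPre
      rw [h1, h2, if_pos hk, if_neg (by decide), if_neg (by decide), if_neg (by decide),
        if_neg (by decide), if_neg (by decide), if_pos rfl]
    have e6 : stepPre n p (9*k+6) y
        = 2 * yext y (9*k+6) + (-4) * yext y (9*k+7) + 0 * yext y 0 + 0 := by
      have h1 : (9*k+6)/9 = k := by omega
      have h2 : (9*k+6)%9 = 6 := by omega
      unfold stepPre
      rw [h1, h2, if_pos hk, if_neg (by decide), if_neg (by decide), if_neg (by decide),
        if_neg (by decide), if_neg (by decide), if_neg (by decide), if_pos rfl]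
    have e7 : stepPre n p (9*k+7) y
        = 2 * yext y (9*k+6) + (-4) * yext y (9*k+7) + 0 * yext y 0 + (-(1/2)) := by
      have h1 : (9*k+7)/9 = k := by omega
      have h2 : (9*k+7)%9 = 7 := by omega
      unfold stepPre
      rw [h1, h2, if_pos hk, if_neg (by decide), if_neg (by decide), if_neg (by decide),
        if_neg (by decide), if_neg (by decide), if_neg (by decide), if_neg (by decide),
        if_pos rfl]
    have e8 : stepPre n p (9*k+8) y
        = 4 * yext y (9*k+8) + (-8) * yext y (9*k+6) + 16 * yext y (9*k+7) + 0 := by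
      have h1 : (9*k+8)/9 = k := by omega
      have h2 : (9*k+8)%9 = 8 := by omega
      unfold stepPre
      rw [h1, h2, if_pos hk, if_neg (by decide), if_neg (by decide), if_neg (by decide),
        if_neg (by decide), if_neg (by decide), if_neg (by decide), if_neg (by decide),
        if_neg (by decide)]
    refine ⟨?_, ?_, ?_⟩
    · rw [hev0, hev 1 (by norm_num), hev 2 (by norm_num), e0, e1, e2]
      exact trip_step (yext y 0) hua.1 hua.2 T1
    · rw [hev 3 (by norm_num), hev 4 (by norm_num), hev 5 (by norm_num), e3, e4, e5]
      exact trip_step (yext y 0) hub.1 hub.2 T2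
    · rw [hev 6 (by norm_num), hev 7 (by norm_num), hev 8 (by norm_num), e6, e7, e8]
      exact trip_step (yext y 0) hu3.1 hu3.2 T3
  · intro hodd
    have hq : 9*(p/2) < 6*n := by omega
    rw [yext_lt _ hq]
    show relu (stepPre n p (9*(p/2)) y) = _
    have h1 : (9*(p/2))/9 = p/2 := by omega
    unfold stepPre
    rw [h1, if_neg (lt_irrefl _), if_pos ⟨rfl, hodd⟩]
    have harg : (1:ℝ) * yext y (9*(p/2)) + 0 * yext y 0 + 0 * yext y 0 + 0
        = yext y (9*(p/2)) := by ring
    rw [harg, hg.2 hodd, relu_relu]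

lemma good_init {n w0 p : ℕ} {V : Fin p → (Fin w0 → ℝ) → ℝ} {h : Fin w0 → ℝ}
    (hn : 2 ≤ n) (hpn : p ≤ n) (hyp : ∀ i, V i h ≤ 1) :
    GoodState n V 0 h (levelL2 n p (levelL1 n V h)) := by
  have hVle : ∀ j, j < p → Vx V j h ≤ 1 := by
    intro j hj; unfold Vx; rw [dif_pos hj]; exact hyp _
  constructor
  · intro k hk
    have hua : 0 ≤ relu (Vx V (2*k) h) ∧ relu (Vx V (2*k) h) ≤ 1 :=
      ⟨relu_nonneg _, relu_le_one (hVle _ (by omega))⟩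
    have hub : 0 ≤ relu (Vx V (2*k+1) h) ∧ relu (Vx V (2*k+1) h) ≤ 1 :=
      ⟨relu_nonneg _, relu_le_one (hVle _ (by omega))⟩
    have hu3 : 0 ≤ (relu (Vx V (2*k) h) + relu (Vx V (2*k+1) h))/2 ∧
        (relu (Vx V (2*k) h) + relu (Vx V (2*k+1) h))/2 ≤ 1 :=
      ⟨by have := hua.1; have := hub.1; linarith, by have := hua.2; have := hub.2; linarith⟩
    -- values of the first layer
    have hev1 : ∀ d : ℕ, d ≤ 8 → yext (levelL1 n V h) (9*k+d) = relu (l1Pre V (9*k+d) h) := by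
      intro d hd
      rw [yext_lt _ (show 9*k+d < 6*n by omega)]; rfl
    have F0 : yext (levelL1 n V h) (9*k) = relu (Vx V (2*k) h) := by
      rw [yext_lt _ (show 9*k < 6*n by omega)]
      show relu (l1Pre V (9*k) h) = _
      have h1 : (9*k)/9 = k := by omega
      have h2 : (9*k)%9 = 0 := by omega
      unfold l1Pre
      rw [h1, h2, if_pos hk, if_pos rfl]
      exact congrArg relu (by ring)
    have F1 : yext (levelL1 n V h) (9*k+1) = relu (Vx V (2*k) h - 1/2) := by
      rw [hev1 1 (by norm_num)]
      have h1 : (9*k+1)/9 = k := by omega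
      have h2 : (9*k+1)%9 = 1 := by omega
      unfold l1Pre
      rw [h1, h2, if_pos hk, if_neg (by decide), if_pos rfl]
      exact congrArg relu (by ring)
    have F2 : yext (levelL1 n V h) (9*k+2) = 4 * relu (Vx V (2*k) h) := by
      rw [hev1 2 (by norm_num)]
      have h1 : (9*k+2)/9 = k := by omega
      have h2 : (9*k+2)%9 = 2 := by omega
      unfold l1Pre
      rw [h1, h2, if_pos hk, if_neg (by decide), if_neg (by decide), if_pos rfl]
      rw [show (4:ℝ) * Vx V (2*k) h + 0 = 4 * Vx V (2*k) h by ring]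
      exact relu_const_mul 4 _ (by norm_num)
    have F3 : yext (levelL1 n V h) (9*k+3) = relu (Vx V (2*k+1) h) := by
      rw [hev1 3 (by norm_num)]
      have h1 : (9*k+3)/9 = k := by omega
      have h2 : (9*k+3)%9 = 3 := by omega
      unfold l1Pre
      rw [h1, h2, if_pos hk, if_neg (by decide), if_neg (by decide), if_neg (by decide),
        if_pos rfl]
      exact congrArg relu (by ring)
    have F4 : yext (levelL1 n V h) (9*k+4) = relu (Vx V (2*k+1) h - 1/2) := by
      rw [hev1 4 (by norm_num)]
      have h1 : (9*k+4)/9 = k := by omega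
      have h2 : (9*k+4)%9 = 4 := by omega
      unfold l1Pre
      rw [h1, h2, if_pos hk, if_neg (by decide), if_neg (by decide), if_neg (by decide),
        if_neg (by decide), if_pos rfl]
      exact congrArg relu (by ring)
    have F5 : yext (levelL1 n V h) (9*k+5) = 4 * relu (Vx V (2*k+1) h) := by
      rw [hev1 5 (by norm_num)]
      have h1 : (9*k+5)/9 = k := by omega
      have h2 : (9*k+5)%9 = 5 := by omega
      unfold l1Pre
      rw [h1, h2, if_pos hk, if_neg (by decide), if_neg (by decide), if_neg (by decide),
        if_neg (by decide), if_neg (by decide), if_pos rfl]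
      rw [show (4:ℝ) * Vx V (2*k+1) h + 0 = 4 * Vx V (2*k+1) h by ring]
      exact relu_const_mul 4 _ (by norm_num)
    -- layer-1 triples
    have T1 : Trip 0 (relu (Vx V (2*k) h)) (yext (levelL1 n V h) (9*k))
        (yext (levelL1 n V h) (9*k+1)) (yext (levelL1 n V h) (9*k+2)) := by
      refine ⟨?_, ?_, ?_⟩
      · rw [Function.iterate_zero_apply]; exact F0
      · rw [Function.iterate_zero_apply, F1]
        exact (relu_sub_const (Vx V (2*k) h) (1/2) (by norm_num)).symm
      · rw [asq_zero, F2]; norm_num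
    have T2 : Trip 0 (relu (Vx V (2*k+1) h)) (yext (levelL1 n V h) (9*k+3))
        (yext (levelL1 n V h) (9*k+4)) (yext (levelL1 n V h) (9*k+5)) := by
      refine ⟨?_, ?_, ?_⟩
      · rw [Function.iterate_zero_apply]; exact F3
      · rw [Function.iterate_zero_apply, F4]
        exact (relu_sub_const (Vx V (2*k+1) h) (1/2) (by norm_num)).symm
      · rw [asq_zero, F5]; norm_num
    -- second layer
    have hev2 : ∀ d : ℕ, d ≤ 8 → yext (levelL2 n p (levelL1 n V h)) (9*k+d)
        = relu (l2Pre n p (9*k+d) (levelL1 n V h)) := by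
      intro d hd
      rw [yext_lt _ (show 9*k+d < 6*n by omega)]; rfl
    have hev20 : yext (levelL2 n p (levelL1 n V h)) (9*k)
        = relu (l2Pre n p (9*k) (levelL1 n V h)) := by
      rw [yext_lt _ (show 9*k < 6*n by omega)]; rfl
    have g0 : l2Pre n p (9*k) (levelL1 n V h)
        = 2 * yext (levelL1 n V h) (9*k) + (-4) * yext (levelL1 n V h) (9*k+1)
          + 0 * yext (levelL1 n V h) 0 + 0 := by
      have h1 : (9*k)/9 = k := by omega
      have h2 : (9*k)%9 = 0 := by omega
      unfold l2Pre; rw [h1, h2, if_pos hk, if_pos rfl]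
    have g1 : l2Pre n p (9*k+1) (levelL1 n V h)
        = 2 * yext (levelL1 n V h) (9*k) + (-4) * yext (levelL1 n V h) (9*k+1)
          + 0 * yext (levelL1 n V h) 0 + (-(1/2)) := by
      have h1 : (9*k+1)/9 = k := by omega
      have h2 : (9*k+1)%9 = 1 := by omega
      unfold l2Pre; rw [h1, h2, if_pos hk, if_neg (by decide), if_pos rfl]
    have g2 : l2Pre n p (9*k+2) (levelL1 n V h)
        = 4 * yext (levelL1 n V h) (9*k+2) + (-8) * yext (levelL1 n V h) (9*k)
          + 16 * yext (levelL1 n V h) (9*k+1) + 0 := by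
      have h1 : (9*k+2)/9 = k := by omega
      have h2 : (9*k+2)%9 = 2 := by omega
      unfold l2Pre
      rw [h1, h2, if_pos hk, if_neg (by decide), if_neg (by decide), if_pos rfl]
    have g3 : l2Pre n p (9*k+3) (levelL1 n V h)
        = 2 * yext (levelL1 n V h) (9*k+3) + (-4) * yext (levelL1 n V h) (9*k+4)
          + 0 * yext (levelL1 n V h) 0 + 0 := by
      have h1 : (9*k+3)/9 = k := by omega
      have h2 : (9*k+3)%9 = 3 := by omega
      unfold l2Pre
      rw [h1, h2, if_pos hk, if_neg (by decide), if_neg (by decide), if_neg (by decide),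
        if_pos rfl]
    have g4 : l2Pre n p (9*k+4) (levelL1 n V h)
        = 2 * yext (levelL1 n V h) (9*k+3) + (-4) * yext (levelL1 n V h) (9*k+4)
          + 0 * yext (levelL1 n V h) 0 + (-(1/2)) := by
      have h1 : (9*k+4)/9 = k := by omega
      have h2 : (9*k+4)%9 = 4 := by omega
      unfold l2Pre
      rw [h1, h2, if_pos hk, if_neg (by decide), if_neg (by decide), if_neg (by decide),
        if_neg (by decide), if_pos rfl]
    have g5 : l2Pre n p (9*k+5) (levelL1 n V h)
        = 4 * yext (levelL1 n V h) (9*k+5) + (-8) * yext (levelL1 n V h) (9*k+3)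
          + 16 * yext (levelL1 n V h) (9*k+4) + 0 := by
      have h1 : (9*k+5)/9 = k := by omega
      have h2 : (9*k+5)%9 = 5 := by omega
      unfold l2Pre
      rw [h1, h2, if_pos hk, if_neg (by decide), if_neg (by decide), if_neg (by decide),
        if_neg (by decide), if_neg (by decide), if_pos rfl]
    have g6 : l2Pre n p (9*k+6) (levelL1 n V h)
        = (1/2) * yext (levelL1 n V h) (9*k) + (1/2) * yext (levelL1 n V h) (9*k+3)
          + 0 * yext (levelL1 n V h) 0 + 0 := by
      have h1 : (9*k+6)/9 = k := by omega
      have h2 : (9*k+6)%9 = 6 := by omega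
      unfold l2Pre
      rw [h1, h2, if_pos hk, if_neg (by decide), if_neg (by decide), if_neg (by decide),
        if_neg (by decide), if_neg (by decide), if_neg (by decide), if_pos rfl]
    have g7 : l2Pre n p (9*k+7) (levelL1 n V h)
        = (1/2) * yext (levelL1 n V h) (9*k) + (1/2) * yext (levelL1 n V h) (9*k+3)
          + 0 * yext (levelL1 n V h) 0 + (-(1/2)) := by
      have h1 : (9*k+7)/9 = k := by omega
      have h2 : (9*k+7)%9 = 7 := by omega
      unfold l2Pre
      rw [h1, h2, if_pos hk, if_neg (by decide), if_neg (by decide), if_neg (by decide),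
        if_neg (by decide), if_neg (by decide), if_neg (by decide), if_neg (by decide),
        if_pos rfl]
    have g8 : l2Pre n p (9*k+8) (levelL1 n V h)
        = 2 * yext (levelL1 n V h) (9*k) + 2 * yext (levelL1 n V h) (9*k+3)
          + 0 * yext (levelL1 n V h) 0 + 0 := by
      have h1 : (9*k+8)/9 = k := by omega
      have h2 : (9*k+8)%9 = 8 := by omega
      unfold l2Pre
      rw [h1, h2, if_pos hk, if_neg (by decide), if_neg (by decide), if_neg (by decide),
        if_neg (by decide), if_neg (by decide), if_neg (by decide), if_neg (by decide),
        if_neg (by decide)]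
    refine ⟨?_, ?_, ?_⟩
    · rw [hev20, hev2 1 (by norm_num), hev2 2 (by norm_num), g0, g1, g2]
      exact trip_step (yext (levelL1 n V h) 0) hua.1 hua.2 T1
    · rw [hev2 3 (by norm_num), hev2 4 (by norm_num), hev2 5 (by norm_num), g3, g4, g5]
      exact trip_step (yext (levelL1 n V h) 0) hub.1 hub.2 T2
    · refine ⟨?_, ?_, ?_⟩
      · rw [hev2 6 (by norm_num), g6, F0, F3, Function.iterate_zero_apply]
        rw [show (1/2) * relu (Vx V (2*k) h) + (1/2) * relu (Vx V (2*k+1) h)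
            + 0 * yext (levelL1 n V h) 0 + 0
            = (relu (Vx V (2*k) h) + relu (Vx V (2*k+1) h))/2 by ring]
        exact relu_of_nonneg hu3.1
      · rw [hev2 7 (by norm_num), g7, F0, F3, Function.iterate_zero_apply]
        rw [show (1/2) * relu (Vx V (2*k) h) + (1/2) * relu (Vx V (2*k+1) h)
            + 0 * yext (levelL1 n V h) 0 + (-(1/2))
            = (relu (Vx V (2*k) h) + relu (Vx V (2*k+1) h))/2 - 1/2 by ring]
      · rw [hev2 8 (by norm_num), g8, F0, F3, asq_zero]
        rw [show 2 * relu (Vx V (2*k) h) + 2 * relu (Vx V (2*k+1) h)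
            + 0 * yext (levelL1 n V h) 0 + 0
            = 4^(0+1) * ((relu (Vx V (2*k) h) + relu (Vx V (2*k+1) h))/2) by ring]
        exact relu_of_nonneg (mul_nonneg (by positivity) hu3.1)
  · intro hodd
    have hq : 9*(p/2) < 6*n := by omega
    have hp1 : yext (levelL1 n V h) (9*(p/2)) = relu (Vx V (p-1) h) := by
      rw [yext_lt _ hq]
      show relu (l1Pre V (9*(p/2)) h) = _
      have h1 : (9*(p/2))/9 = p/2 := by omega
      unfold l1Pre
      rw [h1, if_neg (lt_irrefl _), if_pos ⟨rfl, hodd⟩]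
      exact congrArg relu (by ring)
    rw [yext_lt _ hq]
    show relu (l2Pre n p (9*(p/2)) (levelL1 n V h)) = _
    have h1 : (9*(p/2))/9 = p/2 := by omega
    unfold l2Pre
    rw [h1, if_neg (lt_irrefl _), if_pos ⟨rfl, hodd⟩]
    rw [show (1:ℝ) * yext (levelL1 n V h) (9*(p/2)) + 0 * yext (levelL1 n V h) 0
        + 0 * yext (levelL1 n V h) 0 + 0 = yext (levelL1 n V h) (9*(p/2)) by ring]
    rw [hp1, relu_relu]

lemma good_iter {n w0 p : ℕ} {V : Fin p → (Fin w0 → ℝ) → ℝ} {h : Fin w0 → ℝ}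
    (hn : 2 ≤ n) (hpn : p ≤ n) (hyp : ∀ i, V i h ≤ 1) (s : ℕ) :
    GoodState n V s h ((levelStep n p)^[s] (levelL2 n p (levelL1 n V h))) := by
  induction s with
  | zero => exact good_init hn hpn hyp
  | succ s ih =>
      rw [Function.iterate_succ_apply']
      exact good_step hn hpn hyp ih

/-! ### readout of a level and the main level lemma -/

noncomputable def levelOut (n p m : ℕ) (i' : ℕ) (y : Fin (6*n) → ℝ) : ℝ :=
  if 2*i'+1 < p then
    (2/4^(m+4)) * yext y (9*i'+8) + (-(1/(2*4^(m+5)))) * yext y (9*i'+2)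
      + (-(1/(2*4^(m+5)))) * yext y (9*i'+5) + 0
  else 1 * yext y (9*(p/2)) + 0 * yext y 0 + 0 * yext y 0 + 0

lemma isAff_levelOut (n p m i' : ℕ) : IsAff (levelOut n p m i') := by
  unfold levelOut
  repeat' first
    | apply IsAff.ite
    | apply IsAff.lin3

lemma level_main {w0 : ℕ} (n m p : ℕ) (hn : 2 ≤ n) (hp2 : 2 ≤ p) (hpn : p ≤ n)
    (V : Fin p → (Fin w0 → ℝ) → ℝ) (hV : ∀ i, IsAff (V i)) :
    ∃ Φ : (Fin w0 → ℝ) → Fin (6*n) → ℝ,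
      Stack w0 (List.replicate (m+5) (6*n)) (6*n) Φ ∧
      ∀ h : Fin w0 → ℝ, (∀ i, V i h ≤ 1) →
        (∀ i' : ℕ, 2*i'+1 < p →
          |levelOut n p m i' (Φ h) - relu (Vx V (2*i') h) * relu (Vx V (2*i'+1) h)|
            ≤ 9/4^(m+5) ∧ levelOut n p m i' (Φ h) ≤ 1) ∧
        (p % 2 = 1 → ∀ i' : ℕ, ¬(2*i'+1 < p) →
          levelOut n p m i' (Φ h) = relu (Vx V (p-1) h)) := by
  refine ⟨fun h => (levelStep n p)^[m+3] (levelL2 n p (levelL1 n V h)), ?_, ?_⟩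
  · have s1 : Stack w0 [6*n] (6*n) (levelL1 n V) := (reluLayer_l1 n hV).stack
    have s2 : Stack (6*n) [6*n] (6*n) (levelL2 n p) := (reluLayer_l2 n p).stack
    have s3 := (reluLayer_step n p).stack_iterate (m+3)
    have hc := s1.comp (s2.comp s3)
    have hlist : ([6*n] ++ ([6*n] ++ List.replicate (m+3) (6*n)))
        = List.replicate (m+5) (6*n) := rfl
    rw [hlist] at hc
    exact hc
  · intro h hyp
    have G := good_iter hn hpn hyp (m+3)
    have hVle : ∀ j, j < p → Vx V j h ≤ 1 := by
      intro j hj; unfold Vx; rw [dif_pos hj]; exact hyp _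
    constructor
    · intro i' hi'
      have hk : i' < p/2 := by omega
      obtain ⟨Ta, Tb, Tc⟩ := G.1 i' hk
      have hua : 0 ≤ relu (Vx V (2*i') h) ∧ relu (Vx V (2*i') h) ≤ 1 :=
        ⟨relu_nonneg _, relu_le_one (hVle _ (by omega))⟩
      have hub : 0 ≤ relu (Vx V (2*i'+1) h) ∧ relu (Vx V (2*i'+1) h) ≤ 1 :=
        ⟨relu_nonneg _, relu_le_one (hVle _ (by omega))⟩
      have hu3 : 0 ≤ (relu (Vx V (2*i') h) + relu (Vx V (2*i'+1) h))/2 ∧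
          (relu (Vx V (2*i') h) + relu (Vx V (2*i'+1) h))/2 ≤ 1 :=
        ⟨by have := hua.1; have := hub.1; linarith, by have := hua.2; have := hub.2; linarith⟩
      have hout : levelOut n p m i'
            ((levelStep n p)^[m+3] (levelL2 n p (levelL1 n V h)))
          = 2 * asq (m+3) ((relu (Vx V (2*i') h) + relu (Vx V (2*i'+1) h))/2)
            - asq (m+3+1) (relu (Vx V (2*i') h))/2
            - asq (m+3+1) (relu (Vx V (2*i'+1) h))/2 := by
        unfold levelOut
        rw [if_pos hi', Ta.2.2, Tb.2.2, Tc.2.2]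
        have h1 : ((4:ℝ)^(m+4)) ≠ 0 := by positivity
        have h2 : ((4:ℝ)^(m+5)) ≠ 0 := by positivity
        field_simp
        ring
      rw [hout]
      have ge3 := asq_ge hu3.1 hu3.2 (m+3)
      have le3 := asq_le hu3.1 hu3.2 (m+3)
      have ge1 := asq_ge hua.1 hua.2 (m+3+1)
      have le1 := asq_le hua.1 hua.2 (m+3+1)
      have ge2 := asq_ge hub.1 hub.2 (m+3+1)
      have le2 := asq_le hub.1 hub.2 (m+3+1)
      have r3 : (1:ℝ)/(4*4^(m+3)) = 4/4^(m+5) := by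
        field_simp; ring
      have r4 : (1:ℝ)/(4*4^(m+3+1)) = 1/4^(m+5) := by
        field_simp; ring
      have key : 2*((relu (Vx V (2*i') h) + relu (Vx V (2*i'+1) h))/2)^2
          - (relu (Vx V (2*i') h))^2/2 - (relu (Vx V (2*i'+1) h))^2/2
          = relu (Vx V (2*i') h) * relu (Vx V (2*i'+1) h) := by ring
      constructor
      · rw [r3] at le3
        rw [r4] at le1 le2
        have g9 : (9:ℝ)/4^(m+5) = 9*(1/4^(m+5)) := by ring
        have g4 : (4:ℝ)/4^(m+5) = 4*(1/4^(m+5)) := by ring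
        rw [abs_le, g9]
        rw [g4] at le3
        set Y : ℝ := (1:ℝ)/4^(m+5) with hY
        have hYpos : (0:ℝ) < Y := by rw [hY]; positivity
        clear_value Y
        constructor
        · linarith [ge3, le1, le2, key]
        · linarith [le3, ge1, ge2, key]
      · have s3' := asq_le_self hu3.1 hu3.2 (m+3)
        nlinarith [ge1, ge2, s3', sq_nonneg (1 - relu (Vx V (2*i') h)),
          sq_nonneg (1 - relu (Vx V (2*i'+1) h))]
    · intro hodd i' hni'
      unfold levelOut
      rw [if_neg hni']
      rw [show (1:ℝ) * yext ((levelStep n p)^[m+3] (levelL2 n p (levelL1 n V h))) (9*(p/2))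
          + 0 * yext ((levelStep n p)^[m+3] (levelL2 n p (levelL1 n V h))) 0
          + 0 * yext ((levelStep n p)^[m+3] (levelL2 n p (levelL1 n V h))) 0 + 0
          = yext ((levelStep n p)^[m+3] (levelL2 n p (levelL1 n V h))) (9*(p/2)) by ring]
      exact G.2 hodd

/-! ### product bookkeeping lemmas -/

lemma abs_prod_sub_prod {ι : Type*} (s : Finset ι) (f g : ι → ℝ)
    (hf : ∀ i ∈ s, 0 ≤ f i ∧ f i ≤ 1) (hg : ∀ i ∈ s, 0 ≤ g i ∧ g i ≤ 1) :
    |∏ i ∈ s, f i - ∏ i ∈ s, g i| ≤ ∑ i ∈ s, |f i - g i| := by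
  classical
  induction s using Finset.induction_on with
  | empty => simp
  | @insert a s ha ih =>
      rw [Finset.prod_insert ha, Finset.prod_insert ha, Finset.sum_insert ha]
      have hfa := hf a (Finset.mem_insert_self a s)
      have hga := hg a (Finset.mem_insert_self a s)
      have hfs : ∀ i ∈ s, 0 ≤ f i ∧ f i ≤ 1 := fun i hi => hf i (Finset.mem_insert_of_mem hi)
      have hgs : ∀ i ∈ s, 0 ≤ g i ∧ g i ≤ 1 := fun i hi => hg i (Finset.mem_insert_of_mem hi)
      have ih' := ih hfs hgs
      have hgprod : 0 ≤ ∏ i ∈ s, g i := Finset.prod_nonneg (fun i hi => (hgs i hi).1)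
      have hgprod1 : ∏ i ∈ s, g i ≤ 1 :=
        Finset.prod_le_one (fun i hi => (hgs i hi).1) (fun i hi => (hgs i hi).2)
      have hsplit : f a * ∏ i ∈ s, f i - g a * ∏ i ∈ s, g i
          = f a * (∏ i ∈ s, f i - ∏ i ∈ s, g i) + (f a - g a) * ∏ i ∈ s, g i := by ring
      rw [hsplit]
      have habs : |f a * (∏ i ∈ s, f i - ∏ i ∈ s, g i) + (f a - g a) * ∏ i ∈ s, g i|
          ≤ |f a| * |∏ i ∈ s, f i - ∏ i ∈ s, g i| + |f a - g a| * |∏ i ∈ s, g i| :=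
        le_trans (abs_add_le _ _) (le_of_eq (by rw [abs_mul, abs_mul]))
      have h1 : |f a| ≤ 1 := abs_le.mpr ⟨by linarith [hfa.1], hfa.2⟩
      have h2 : |∏ i ∈ s, g i| ≤ 1 := abs_le.mpr ⟨by linarith, hgprod1⟩
      have h3 : |f a| * |∏ i ∈ s, f i - ∏ i ∈ s, g i| ≤ 1 * (∑ i ∈ s, |f i - g i|) :=
        mul_le_mul h1 ih' (abs_nonneg _) zero_le_one
      have h4 : |f a - g a| * |∏ i ∈ s, g i| ≤ |f a - g a| * 1 :=
        mul_le_mul_of_nonneg_left h2 (abs_nonneg _)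
      linarith
lemma prod_pairs (R : ℕ → ℝ) (q : ℕ) :
    ∏ j ∈ Finset.range q, (R (2*j) * R (2*j+1)) = ∏ j ∈ Finset.range (2*q), R j := by
  induction q with
  | zero => simp
  | succ q ih =>
      rw [Finset.prod_range_succ, ih, show 2*(q+1) = (2*q+1)+1 by ring,
        Finset.prod_range_succ, Finset.prod_range_succ]
      ring

/-! ### the tree recursion -/

lemma tree (n m : ℕ) (hn : 2 ≤ n) :
    ∀ p, 2 ≤ p → p ≤ n → ∀ w0 (V : Fin p → (Fin w0 → ℝ) → ℝ), (∀ i, IsAff (V i)) →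
    ∃ F : (Fin w0 → ℝ) → ℝ,
      RealizedByReluNet w0 (List.replicate ((m+5) * Nat.clog 2 p) (6*n)) F ∧
      ∀ h, (∀ i, V i h ≤ 1) →
        |F h - ∏ i, relu (V i h)| ≤ ((p - 1 : ℕ) : ℝ) * (9/4^(m+5)) ∧ F h ≤ 1 := by
  intro p
  induction p using Nat.strong_induction_on with
  | _ p IH =>
  intro hp2 hpn w0 V hV
  obtain ⟨Φ, hΦstack, hΦsem⟩ := level_main n m p hn hp2 hpn V hV
  by_cases hp3 : 3 ≤ p
  · -- recursive case
    have hp'2 : 2 ≤ (p+1)/2 := by omega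
    have hp'lt : (p+1)/2 < p := by omega
    have hp'n : (p+1)/2 ≤ n := by omega
    obtain ⟨F', hF'real, hF'sem⟩ := IH ((p+1)/2) hp'lt hp'2 hp'n (6*n)
      (fun i' y => levelOut n p m (i' : ℕ) y) (fun i' => isAff_levelOut n p m _)
    refine ⟨fun h => F' (Φ h), ?_, ?_⟩
    · have hclog : Nat.clog 2 p = Nat.clog 2 ((p+1)/2) + 1 := by
        have hc := Nat.clog_of_two_le (by norm_num : 1 < 2) hp2
        rw [show (p + 2 - 1)/2 = (p+1)/2 by omega] at hc
        exact hc
      have hrep : List.replicate ((m+5) * Nat.clog 2 p) (6*n)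
          = List.replicate (m+5) (6*n)
            ++ List.replicate ((m+5) * Nat.clog 2 ((p+1)/2)) (6*n) := by
        rw [hclog, show (m+5)*(Nat.clog 2 ((p+1)/2) + 1)
          = (m+5) + (m+5)*Nat.clog 2 ((p+1)/2) by ring, List.replicate_add]
      rw [hrep]
      exact hΦstack _ F' hF'real
    · intro h hyp
      have hsem := hΦsem h hyp
      have hVle : ∀ j, j < p → Vx V j h ≤ 1 := by
        intro j hj; unfold Vx; rw [dif_pos hj]; exact hyp _
      have hA : ∀ i' : Fin ((p+1)/2), levelOut n p m (i' : ℕ) (Φ h) ≤ 1 := by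
        intro i'
        by_cases hc : 2*(i' : ℕ)+1 < p
        · exact (hsem.1 (i' : ℕ) hc).2
        · have hlt := i'.isLt
          have hodd : p % 2 = 1 := by omega
          rw [hsem.2 hodd (i' : ℕ) hc]
          exact relu_le_one (hVle _ (by omega))
      obtain ⟨hFb, hFle⟩ := hF'sem (Φ h) (fun i' => hA i')
      try simp only [] at hFb
      refine ⟨?_, hFle⟩
      -- conversions of products to `range` form
      have hprodV : ∏ i : Fin p, relu (V i h) = ∏ j ∈ Finset.range p, relu (Vx V j h) := by
        rw [← Fin.prod_univ_eq_prod_range (fun j => relu (Vx V j h)) p]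
        apply Finset.prod_congr rfl
        intro i _
        unfold Vx
        rw [dif_pos i.isLt, Fin.eta]
      have hprodRV : ∏ i' : Fin ((p+1)/2), relu (levelOut n p m (i' : ℕ) (Φ h))
          = ∏ j ∈ Finset.range ((p+1)/2), relu (levelOut n p m j (Φ h)) :=
        Fin.prod_univ_eq_prod_range (fun j => relu (levelOut n p m j (Φ h))) ((p+1)/2)
      -- the paired products
      have hPC : (∏ j ∈ Finset.range ((p+1)/2),
            (if 2*j+1 < p then relu (Vx V (2*j) h) * relu (Vx V (2*j+1) h)
              else relu (Vx V (2*j) h)))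
          = ∏ j ∈ Finset.range p, relu (Vx V j h) := by
        rcases Nat.mod_two_eq_zero_or_one p with he | ho
        · have hp' : (p+1)/2 = p/2 := by omega
          rw [hp']
          rw [Finset.prod_congr rfl (fun j hj => if_pos
            (by have := Finset.mem_range.mp hj; omega))]
          rw [prod_pairs (fun t => relu (Vx V t h)) (p/2)]
          rw [show 2*(p/2) = p by omega]
        · have hp' : (p+1)/2 = p/2 + 1 := by omega
          rw [hp', Finset.prod_range_succ]
          rw [Finset.prod_congr rfl (fun j hj => if_pos
            (by have := Finset.mem_range.mp hj; omega))]
          rw [prod_pairs (fun t => relu (Vx V t h)) (p/2), if_neg (by omega)]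
          rw [← Finset.prod_range_succ (fun j => relu (Vx V j h)) (2*(p/2))]
          rw [show 2*(p/2)+1 = p by omega]
      -- memberships for the product comparison
      have hRVmem : ∀ j ∈ Finset.range ((p+1)/2),
          0 ≤ relu (levelOut n p m j (Φ h)) ∧ relu (levelOut n p m j (Φ h)) ≤ 1 := by
        intro j hj
        refine ⟨relu_nonneg _, relu_le_one (hA ⟨j, Finset.mem_range.mp hj⟩)⟩
      have hCmem : ∀ j ∈ Finset.range ((p+1)/2),
          0 ≤ (if 2*j+1 < p then relu (Vx V (2*j) h) * relu (Vx V (2*j+1) h)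
              else relu (Vx V (2*j) h)) ∧
          (if 2*j+1 < p then relu (Vx V (2*j) h) * relu (Vx V (2*j+1) h)
              else relu (Vx V (2*j) h)) ≤ 1 := by
        intro j hj
        have hjlt := Finset.mem_range.mp hj
        split_ifs with hc
        · exact ⟨mul_nonneg (relu_nonneg _) (relu_nonneg _),
            mul_le_one₀ (relu_le_one (hVle _ (by omega))) (relu_nonneg _)
              (relu_le_one (hVle _ (by omega)))⟩
        · exact ⟨relu_nonneg _, relu_le_one (hVle _ (by omega))⟩
      have hEdiff := abs_prod_sub_prod (Finset.range ((p+1)/2))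
        (fun j => relu (levelOut n p m j (Φ h)))
        (fun j => if 2*j+1 < p then relu (Vx V (2*j) h) * relu (Vx V (2*j+1) h)
          else relu (Vx V (2*j) h)) hRVmem hCmem
      -- bound the sum of errors
      have hterm : ∀ j ∈ Finset.range (p/2),
          |relu (levelOut n p m j (Φ h)) -
            (if 2*j+1 < p then relu (Vx V (2*j) h) * relu (Vx V (2*j+1) h)
              else relu (Vx V (2*j) h))| ≤ 9/4^(m+5) := by
        intro j hj
        have hjlt := Finset.mem_range.mp hj
        have hc : 2*j+1 < p := by omega
        rw [if_pos hc]
        exact le_trans (abs_relu_sub_le _ _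
          (mul_nonneg (relu_nonneg _) (relu_nonneg _))) (hsem.1 j hc).1
      have hsum : ∑ j ∈ Finset.range ((p+1)/2),
          |relu (levelOut n p m j (Φ h)) -
            (if 2*j+1 < p then relu (Vx V (2*j) h) * relu (Vx V (2*j+1) h)
              else relu (Vx V (2*j) h))| ≤ ((p/2 : ℕ) : ℝ) * (9/4^(m+5)) := by
        rcases Nat.mod_two_eq_zero_or_one p with he | ho
        · have hp' : (p+1)/2 = p/2 := by omega
          rw [hp']
          calc ∑ j ∈ Finset.range (p/2), _ ≤ (Finset.range (p/2)).card • (9/4^(m+5) : ℝ) :=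
                Finset.sum_le_card_nsmul _ _ _ hterm
            _ = ((p/2 : ℕ) : ℝ) * (9/4^(m+5)) := by
                rw [Finset.card_range, nsmul_eq_mul]
        · have hp' : (p+1)/2 = p/2 + 1 := by omega
          rw [hp', Finset.sum_range_succ]
          have hlast : |relu (levelOut n p m (p/2) (Φ h)) -
              (if 2*(p/2)+1 < p then relu (Vx V (2*(p/2)) h) * relu (Vx V (2*(p/2)+1) h)
                else relu (Vx V (2*(p/2)) h))| = 0 := by
            rw [if_neg (by omega)]
            rw [hsem.2 ho (p/2) (by omega), relu_relu]
            rw [show 2*(p/2) = p - 1 by omega]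
            simp
          rw [hlast]
          have := Finset.sum_le_card_nsmul (Finset.range (p/2)) _ _ hterm
          rw [Finset.card_range, nsmul_eq_mul] at this
          linarith
      -- combine
      rw [hprodV, ← hPC]
      have htri := abs_sub_le (F' (Φ h))
        (∏ i' : Fin ((p+1)/2), relu (levelOut n p m (i' : ℕ) (Φ h)))
        (∏ j ∈ Finset.range ((p+1)/2),
          (if 2*j+1 < p then relu (Vx V (2*j) h) * relu (Vx V (2*j+1) h)
            else relu (Vx V (2*j) h)))
      rw [hprodRV] at htri
      have hcast : ((p - 1 : ℕ) : ℝ) = (((p+1)/2 - 1 : ℕ) : ℝ) + ((p/2 : ℕ) : ℝ) := by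
        have hnat : (p - 1) = ((p+1)/2 - 1) + p/2 := by omega
        exact_mod_cast congrArg (Nat.cast : ℕ → ℝ) hnat
      rw [hcast]
      have hEdiff' := le_trans hEdiff hsum
      rw [← hprodRV] at hEdiff'
      calc |F' (Φ h) - ∏ j ∈ Finset.range ((p+1)/2),
            (if 2*j+1 < p then relu (Vx V (2*j) h) * relu (Vx V (2*j+1) h)
              else relu (Vx V (2*j) h))|
          ≤ |F' (Φ h) - ∏ i' : Fin ((p+1)/2), relu (levelOut n p m (i' : ℕ) (Φ h))|
            + |∏ i' : Fin ((p+1)/2), relu (levelOut n p m (i' : ℕ) (Φ h))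
              - ∏ j ∈ Finset.range ((p+1)/2),
                (if 2*j+1 < p then relu (Vx V (2*j) h) * relu (Vx V (2*j+1) h)
                  else relu (Vx V (2*j) h))| := by
            rw [hprodRV]; exact htri
        _ ≤ (((p+1)/2 - 1 : ℕ) : ℝ) * (9/4^(m+5)) + ((p/2 : ℕ) : ℝ) * (9/4^(m+5)) := by
            exact add_le_add hFb hEdiff'
        _ = ((((p+1)/2 - 1 : ℕ) : ℝ) + ((p/2 : ℕ) : ℝ)) * (9/4^(m+5)) := by ring
  · -- base case p = 2
    have hp2' : p = 2 := by omega
    subst hp2'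
    refine ⟨fun h => levelOut n 2 m 0 (Φ h), ?_, ?_⟩
    · have hclog : Nat.clog 2 2 = 1 := by
        have hc := Nat.clog_of_two_le (by norm_num : 1 < 2) (le_refl 2)
        rw [show (2 + 2 - 1)/2 = 1 by norm_num, Nat.clog_one_right] at hc
        exact hc
      rw [show (m+5) * Nat.clog 2 2 = m+5 by rw [hclog]; ring]
      exact hΦstack.realize (isAff_levelOut n 2 m 0)
    · intro h hyp
      have hsem := hΦsem h hyp
      have hm := hsem.1 0 (by norm_num)
      have h0 : Vx V 0 h = V 0 h := by
        unfold Vx; rw [dif_pos (show (0:ℕ) < 2 by norm_num)]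
        exact congrFun (congrArg V (by decide)) h
      have h1 : Vx V 1 h = V 1 h := by
        unfold Vx; rw [dif_pos (show (1:ℕ) < 2 by norm_num)]
        exact congrFun (congrArg V (by decide)) h
      have hprod : ∏ i : Fin 2, relu (V i h) = relu (Vx V 0 h) * relu (Vx V 1 h) := by
        rw [Fin.prod_univ_two, h0, h1]
      refine ⟨?_, (hm).2⟩
      rw [hprod]
      have : ((2 - 1 : ℕ) : ℝ) * (9/4^(m+5)) = 9/4^(m+5) := by norm_num
      rw [this]
      have hb := hm.1
      rw [show 2*0 = 0 by norm_num, show 2*0+1 = 1 by norm_num] at hb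
      exact hb

/-! ### the input stage: computing g1 exactly -/

lemma g1_nonneg (v : ℝ) : 0 ≤ g1 v := le_max_right _ _

lemma g1_le_one (v : ℝ) : g1 v ≤ 1 :=
  max_le (by linarith [abs_nonneg v]) zero_le_one

lemma hat_eq (v : ℝ) : relu (v+1) - 2*relu v + relu (v-1) = g1 v := by
  unfold relu g1
  rcases le_total v 0 with hv | hv
  · rw [abs_of_nonpos hv]
    rcases le_total v (-1) with h1 | h1
    · rw [max_eq_right (by linarith : v + 1 ≤ 0), max_eq_right hv,
        max_eq_right (by linarith : v - 1 ≤ 0), max_eq_right (by linarith : 1 - -v ≤ 0)]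
      ring
    · rw [max_eq_left (by linarith : (0:ℝ) ≤ v + 1), max_eq_right hv,
        max_eq_right (by linarith : v - 1 ≤ 0), max_eq_left (by linarith : (0:ℝ) ≤ 1 - -v)]
      ring
  · rw [abs_of_nonneg hv]
    rcases le_total v 1 with h1 | h1
    · rw [max_eq_left (by linarith : (0:ℝ) ≤ v + 1), max_eq_left hv,
        max_eq_right (by linarith : v - 1 ≤ 0), max_eq_left (by linarith : (0:ℝ) ≤ 1 - v)]
      ring
    · rw [max_eq_left (by linarith : (0:ℝ) ≤ v + 1), max_eq_left hv,
        max_eq_left (by linarith : (0:ℝ) ≤ v - 1), max_eq_right (by linarith : 1 - v ≤ 0)]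
      ring

noncomputable def inPre1 (i : ℕ) {n : ℕ} (x : Fin n → ℝ) : ℝ :=
  1 * yext x (i/3) + 0 * yext x 0 + 0 * yext x 0 + (1 - ((i%3 : ℕ) : ℝ))

noncomputable def inL1 (n : ℕ) (x : Fin n → ℝ) (i : Fin (3*n)) : ℝ := relu (inPre1 (i:ℕ) x)

noncomputable def inPre2 (i : ℕ) {n : ℕ} (y : Fin (3*n) → ℝ) : ℝ :=
  1 * yext y (3*i) + (-2) * yext y (3*i+1) + 1 * yext y (3*i+2) + 0

noncomputable def inL2 (n : ℕ) (y : Fin (3*n) → ℝ) (i : Fin n) : ℝ := relu (inPre2 (i:ℕ) y)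

lemma reluLayer_in1 (n : ℕ) : ReluLayer (inL1 n) := by
  intro i
  refine ⟨fun x => inPre1 (i:ℕ) x, ?_, fun y => rfl⟩
  unfold inPre1
  apply IsAff.lin3

lemma reluLayer_in2 (n : ℕ) : ReluLayer (inL2 n) := by
  intro i
  refine ⟨fun y => inPre2 (i:ℕ) y, ?_, fun y => rfl⟩
  unfold inPre2
  apply IsAff.lin3

lemma inStage_eval {n : ℕ} (x : Fin n → ℝ) (i : Fin n) :
    inL2 n (inL1 n x) i = g1 (x i) := by
  have hi := i.isLt
  have ha : yext (inL1 n x) (3*(i:ℕ)) = relu (yext x (i:ℕ) + 1) := by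
    rw [yext_lt _ (show 3*(i:ℕ) < 3*n by omega)]
    show relu (inPre1 (3*(i:ℕ)) x) = _
    have h1 : (3*(i:ℕ))/3 = (i:ℕ) := by omega
    have h2 : (3*(i:ℕ))%3 = 0 := by omega
    unfold inPre1
    rw [h1, h2]
    exact congrArg relu (by push_cast; ring)
  have hb : yext (inL1 n x) (3*(i:ℕ)+1) = relu (yext x (i:ℕ)) := by
    rw [yext_lt _ (show 3*(i:ℕ)+1 < 3*n by omega)]
    show relu (inPre1 (3*(i:ℕ)+1) x) = _
    have h1 : (3*(i:ℕ)+1)/3 = (i:ℕ) := by omega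
    have h2 : (3*(i:ℕ)+1)%3 = 1 := by omega
    unfold inPre1
    rw [h1, h2]
    exact congrArg relu (by push_cast; ring)
  have hc : yext (inL1 n x) (3*(i:ℕ)+2) = relu (yext x (i:ℕ) - 1) := by
    rw [yext_lt _ (show 3*(i:ℕ)+2 < 3*n by omega)]
    show relu (inPre1 (3*(i:ℕ)+2) x) = _
    have h1 : (3*(i:ℕ)+2)/3 = (i:ℕ) := by omega
    have h2 : (3*(i:ℕ)+2)%3 = 2 := by omega
    unfold inPre1
    rw [h1, h2]
    exact congrArg relu (by push_cast; ring)
  have hx : yext x (i:ℕ) = x i := by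
    rw [yext_lt _ hi, Fin.eta]
  show relu (inPre2 (i:ℕ) (inL1 n x)) = _
  unfold inPre2
  rw [ha, hb, hc, hx]
  rw [show (1:ℝ) * relu (x i + 1) + (-2) * relu (x i) + 1 * relu (x i - 1) + 0
      = relu (x i + 1) - 2*relu (x i) + relu (x i - 1) by ring]
  rw [hat_eq]
  exact relu_of_nonneg (g1_nonneg _)

/-! ### the main theorem -/


/-- **The network `AppIdⁿ_{m,temp}` of Section 3.2.** There is a ReLU network `A` with
`(m+5)⌈log₂ n⌉ + 2` hidden layers of widths `3n, n, 6n, …, 6n` approximating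
`x ↦ ∏ⱼ g₁(xⱼ)` on `[0,1]ⁿ` with error at most `3ⁿ · 2^{-m}`. -/
theorem approximate_tent_product_network (n m : ℕ) (hn : 2 ≤ n) (hm : 1 ≤ m) :
    ∃ A : (Fin n → ℝ) → ℝ,
      RealizedByReluNet n
        (3 * n :: n :: List.replicate ((m + 5) * Nat.clog 2 n) (6 * n)) A ∧
      ∀ x : Fin n → ℝ, (∀ j, x j ∈ Set.Icc (0 : ℝ) 1) →
        |A x - ∏ j, g1 (x j)| ≤ 3 ^ n / 2 ^ m := by
  obtain ⟨F, hFreal, hFsem⟩ := tree n m hn n hn (le_refl n) n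
    (fun i h => h i) (fun i => IsAff.coord i)
  refine ⟨fun x => F (inL2 n (inL1 n x)), ?_, ?_⟩
  · have s1 : Stack n [3*n] (3*n) (inL1 n) := (reluLayer_in1 n).stack
    have s2 : Stack (3*n) [n] n (inL2 n) := (reluLayer_in2 n).stack
    have hc := (s1.comp s2) (List.replicate ((m+5) * Nat.clog 2 n) (6*n)) F hFreal
    exact hc
  · intro x _
    have hval : ∀ i : Fin n, inL2 n (inL1 n x) i = g1 (x i) := inStage_eval x
    have hyp : ∀ i : Fin n, inL2 n (inL1 n x) i ≤ 1 := by
      intro i; rw [hval i]; exact g1_le_one _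
    obtain ⟨hb, _⟩ := hFsem (inL2 n (inL1 n x)) hyp
    have hprod : ∏ i : Fin n, relu (inL2 n (inL1 n x) i) = ∏ j, g1 (x j) := by
      apply Finset.prod_congr rfl
      intro i _
      rw [hval i]
      exact relu_of_nonneg (g1_nonneg _)
    rw [hprod] at hb
    -- numeric bound
    have hn3 : (n:ℝ) ≤ 3^n := by
      exact_mod_cast (Nat.lt_pow_self (by norm_num : 1 < 3) (n := n)).le
    have h4 : (4:ℝ)^(m+5) = 4^m * 1024 := by rw [pow_add]; norm_num
    have h24 : (2:ℝ)^m ≤ 4^m := pow_le_pow_left₀ (by norm_num) (by norm_num) m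
    have h2pos : (0:ℝ) < 2^m := by positivity
    have hkey : (n:ℝ) * (9/4^(m+5)) ≤ 3^n/2^m := by
      have e1 : (n:ℝ)*(9/4^(m+5)) = 9*n/(4^m*1024) := by rw [h4]; ring
      rw [e1, div_le_div_iff₀ (by positivity) h2pos]
      have t1 : (9:ℝ)*n ≤ 1024*3^n := by
        nlinarith [hn3, pow_pos (show (0:ℝ)<3 by norm_num) n]
      have t2 : ((9:ℝ)*n)*2^m ≤ (1024*3^n)*4^m :=
        mul_le_mul t1 h24 (le_of_lt h2pos) (by positivity)
      nlinarith [t2]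
    have hle : ((n - 1 : ℕ) : ℝ) * (9/4^(m+5)) ≤ (n:ℝ) * (9/4^(m+5)) := by
      apply mul_le_mul_of_nonneg_right _ (by positivity)
      exact_mod_cast Nat.sub_le n 1
    exact le_trans hb (le_trans hle hkey)
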